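/- Let n be a positive integer, O an n×n complex Hermitian matrix, and ρ an n×n density matrix. Then the function γ ↦ (1/γ)·log(Re Tr(exp(γ•O)·ρ)), defined for real γ ≠ 0, tends to Re Tr(O·ρ) as γ tends to 0 within ℝ \ {0} (i.e., the limit along the punctured neighborhood filter of 0 is the standard expectation value Re Tr(O·ρ)). -/

import Mathlib

open Matrix Filter NormedSpace ComplexOrder

attribute [local instance] Matrix.linftyOpNormedRing Matrix.linftyOpNormedAlgebra

/-- **Convergence of the quantum tilted loss.** For an `n × n` Hermitian observable `O` and
a density matrix `ρ`, the quantum tilted loss `γ ↦ (1/γ) · log (Re Tr (exp (γ • O) * ρ))`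
tends to the standard expectation value `Re Tr (O * ρ)` as `γ → 0` within `ℝ \ {0}`. -/
theorem qtl_tendsto_expectation_at_zero (n : ℕ) (hn : 0 < n)
    (O ρ : Matrix (Fin n) (Fin n) ℂ)
    (hO : O.IsHermitian) (hρ : ρ.PosSemidef) (hρtr : ρ.trace = 1) :
    Tendsto
      (fun γ : ℝ => (1 / γ) * Real.log ((exp (γ • O) * ρ).trace.re))
      (nhdsWithin 0 {(0 : ℝ)}ᶜ)
      (nhds ((O * ρ).trace.re)) := by
  -- the real-linear functional M ↦ Re Tr (M * ρ)
  have hex : (exp : Matrix (Fin n) (Fin n) ℂ → _) = exp :=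
    rfl
  set L : Matrix (Fin n) (Fin n) ℂ →ₗ[ℝ] ℝ :=
    { toFun := fun M => ((M * ρ).trace).re
      map_add' := by intro M N; simp [add_mul]
      map_smul' := by intro c M; simp [smul_mul_assoc] } with hL
  have hL' : ∀ M, L M = ((M * ρ).trace).re := fun M => rfl
  have hexp : HasDerivAt (fun γ : ℝ => exp (γ • O)) O 0 := by
    have h := hasDerivAt_exp_smul_const (𝕂 := ℝ) O 0
    simp at h
    exact h
  have hf : HasDerivAt (fun γ : ℝ => ((exp (γ • O) * ρ).trace).re)
      (((O * ρ).trace).re) 0 := by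
    have := (L.toContinuousLinearMap.hasFDerivAt
      (x := exp ((0:ℝ) • O))).comp_hasDerivAt 0 hexp
    exact this
  have hf0 : ((exp ((0:ℝ) • O) * ρ).trace).re = 1 := by
    simp [hρtr]
  have hlog : HasDerivAt (fun γ : ℝ => Real.log ((exp (γ • O) * ρ).trace).re)
      (((O * ρ).trace).re) 0 := by
    have := hf.log (by rw [hf0]; norm_num)
    rw [hf0, div_one] at this
    exact this
  have := hasDerivAt_iff_tendsto_slope.mp hlog
  rw [hex]
  refine this.congr (fun γ => ?_)
  rw [slope_def_field]
  rw [show Real.log ((exp ((0:ℝ) • O) * ρ).trace).re = 0 by rw [hf0]; exact Real.log_one]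
  rw [sub_zero, sub_zero, div_eq_inv_mul, one_div, mul_comm]
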